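/- Let R be a commutative Noetherian ring, J ⊆ I ideals, and M an R-module. If M is I-adically complete, then M is J-adically complete. -/

import Mathlib

/-- Elements of `Ideal.span s • N` (for a finite set `s`) are finite combinations
`∑ e in s, e • c e` with `c e ∈ N`. -/
lemma stmt4_aux {R : Type*} [CommRing R] {M : Type*} [AddCommGroup M] [Module R M]
    (s : Finset R) (N : Submodule R M) (x : M)
    (hx : x ∈ Ideal.span (s : Set R) • N) :
    ∃ c : R → M, (∀ e ∈ s, c e ∈ N) ∧ x = ∑ e ∈ s, e • c e := by
  refine Submodule.smul_induction_on hx ?_ ?_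
  · intro r hr m hm
    obtain ⟨g, -, hg⟩ := Submodule.mem_span_finset.mp hr
    refine ⟨fun e => g e • m, fun e _ => N.smul_mem _ hm, ?_⟩
    rw [← hg, Finset.sum_smul]
    refine Finset.sum_congr rfl fun e _ => ?_
    rw [smul_eq_mul, mul_comm, mul_smul]
  · rintro x y ⟨cx, hcx, rfl⟩ ⟨cy, hcy, rfl⟩
    refine ⟨cx + cy, fun e he => N.add_mem (hcx e he) (hcy e he), ?_⟩
    rw [← Finset.sum_add_distrib]
    refine Finset.sum_congr rfl fun e _ => ?_
    rw [Pi.add_apply, smul_add]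

/-- Let `R` be a commutative Noetherian ring, `J ⊆ I` ideals, and `M` an `R`-module.
If `M` is `I`-adically complete, then `M` is `J`-adically complete. -/
theorem stmt4 {R : Type*} [CommRing R] [IsNoetherianRing R] {I J : Ideal R} (hJI : J ≤ I)
    (M : Type*) [AddCommGroup M] [Module R M]
    (hM : IsAdicComplete I M) :
    IsAdicComplete J M := by
  have hpow : ∀ k : ℕ, (J ^ k • ⊤ : Submodule R M) ≤ I ^ k • ⊤ := fun k =>
    Submodule.smul_mono_left (Ideal.pow_right_mono hJI k)
  haveI hH : IsHausdorff J M :=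
    ⟨fun x hx => hM.toIsHausdorff.haus x fun k => (hx k).mono (hpow k)⟩
  suffices hP : IsPrecomplete J M by constructor
  refine ⟨fun f hf => ?_⟩
  -- `f` is `I`-Cauchy, take its `I`-adic limit `L`
  obtain ⟨L, hL⟩ := hM.toIsPrecomplete.prec (f := f)
    (fun {m k} h => (hf h).mono (hpow m))
  refine ⟨L, fun n => ?_⟩
  rw [SModEq.sub_mem]
  -- generators of `J ^ n`
  obtain ⟨s, hs⟩ : (J ^ n).FG := IsNoetherian.noetherian _
  -- successive differences of `f`
  have hd : ∀ t : ℕ, f (t + 1) - f t ∈ (J ^ t • ⊤ : Submodule R M) := fun t => by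
    have := SModEq.sub_mem.mp (hf (Nat.le_succ t))
    simpa using Submodule.neg_mem _ this
  -- decompose the differences along the generators of `J ^ n`
  have hdec : ∀ t : ℕ, ∃ c : R → M,
      (∀ e ∈ s, c e ∈ (J ^ t • ⊤ : Submodule R M)) ∧
        f (n + t + 1) - f (n + t) = ∑ e ∈ s, e • c e := by
    intro t
    refine stmt4_aux s _ _ ?_
    have h1 : (J ^ (n + t) • ⊤ : Submodule R M)
        = Ideal.span (s : Set R) • (J ^ t • ⊤ : Submodule R M) := by
      rw [hs, pow_add, mul_smul]
    exact h1 ▸ hd (n + t)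
  choose c hcmem hceq using hdec
  -- partial sums of the coefficient sequences are `I`-Cauchy
  set g : R → ℕ → M := fun e k => ∑ t ∈ Finset.range k, c t e with hg
  have hgC : ∀ e ∈ s, ∃ Ce : M, ∀ k, g e k ≡ Ce [SMOD (I ^ k • ⊤ : Submodule R M)] := by
    intro e he
    refine hM.toIsPrecomplete.prec (f := g e) (fun {m k} h => ?_)
    rw [SModEq.sub_mem]
    have : g e m - g e k = -∑ t ∈ Finset.Ico m k, c t e := by
      rw [Finset.sum_Ico_eq_sub _ h, hg]; abel
    rw [this]
    refine Submodule.neg_mem _ (Submodule.sum_mem _ fun t ht => ?_)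
    have h1 : (J ^ t • ⊤ : Submodule R M) ≤ I ^ m • ⊤ :=
      le_trans (hpow t) (Submodule.smul_mono_left
        (Ideal.pow_le_pow_right (Finset.mem_Ico.mp ht).1))
    exact h1 (hcmem t e he)
  choose! C hC using hgC
  -- telescoping identity
  have htel : ∀ k : ℕ, f (n + k) - f n = ∑ e ∈ s, e • g e k := by
    intro k
    have h1 := Finset.sum_range_sub (fun t => f (n + t)) k
    simp only [Nat.add_zero] at h1
    rw [← h1, hg]
    simp only [Finset.smul_sum]
    rw [Finset.sum_comm]
    refine Finset.sum_congr rfl fun t _ => ?_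
    rw [← Nat.add_assoc]
    exact hceq t
  -- the limit of the partial sums realizes `L - f n` inside `J ^ n • ⊤`
  have hkey : L - f n = ∑ e ∈ s, e • C e := by
    have hz : L - f n - ∑ e ∈ s, e • C e = 0 := by
      refine hM.toIsHausdorff.haus _ fun k => ?_
      rw [SModEq.zero]
      have h2 : ∑ e ∈ s, e • (g e k - C e)
          = (f (n + k) - f n) - ∑ e ∈ s, e • C e := by
        simp only [smul_sub]
        rw [Finset.sum_sub_distrib, ← htel k]
      have hsplit : L - f n - ∑ e ∈ s, e • C e
          = (L - f (n + k)) + (∑ e ∈ s, e • (g e k - C e)) := by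
        rw [h2]; abel
      rw [hsplit]
      refine Submodule.add_mem _ ?_ (Submodule.sum_mem _ fun e he => ?_)
      · have h1 : (I ^ (n + k) • ⊤ : Submodule R M) ≤ I ^ k • ⊤ :=
          Submodule.smul_mono_left (Ideal.pow_le_pow_right (Nat.le_add_left k n))
        refine h1 ?_
        have := SModEq.sub_mem.mp (hL (n + k))
        simpa using Submodule.neg_mem _ this
      · exact Submodule.smul_of_tower_mem _ e (SModEq.sub_mem.mp (hC e he k))
    exact sub_eq_zero.mp hz
  have : f n - L ∈ (J ^ n • ⊤ : Submodule R M) := by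
    have h1 : f n - L = -(∑ e ∈ s, e • C e) := by rw [← hkey]; abel
    rw [h1]
    refine Submodule.neg_mem _ (Submodule.sum_mem _ fun e he => ?_)
    exact Submodule.smul_mem_smul (hs ▸ Ideal.subset_span he) Submodule.mem_top
  exact this
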